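/- arXiv:2306.10740 — 2 statements merged into one kernel-verified Lean document; each statement's English description precedes it below -/
import Mathlib

section
/- With periodic (or pure interior) meshes, the discrete gradient and discrete divergence are dual: for any piecewise constant scalar field q and vector field v on the mesh, Σ_K |K| [ (∇_T q)_K · v_K + q_K (div_T v)_K ] = 0, where (div_T v)_K = (1/|K|) Σ_{σ=K|L ∈ E(K)} |σ| (v_K+v_L)/2 · ν_{σ,K} and (∇_T q)_K = (1/|K|) Σ_{σ=K|L ∈ E(K)} |σ| (q_K+q_L)/2 ν_{σ,K}. -/
open RealInnerProductSpace

theorem stmt_11 {d : ℕ} {ι F : Type*} [Fintype ι] [Fintype F] [DecidableEq ι]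
    (vol : ι → ℝ) (hvol : ∀ K, 0 < vol K)
    (c0 c1 : F → ι) (s : F → ℝ) (hs : ∀ σ, 0 < s σ)
    (ν : F → EuclideanSpace ℝ (Fin d))
    (q : ι → ℝ) (v : ι → EuclideanSpace ℝ (Fin d))
    (hgeo : ∀ K : ι,
      ∑ σ, ((if c0 σ = K then s σ else 0) - (if c1 σ = K then s σ else 0)) • ν σ = 0)
    (gradT : ι → EuclideanSpace ℝ (Fin d))
    (hgrad : ∀ K, gradT K = (vol K)⁻¹ •
      ∑ σ, ((if c0 σ = K then s σ * ((q (c0 σ) + q (c1 σ)) / 2) else 0)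
            - (if c1 σ = K then s σ * ((q (c0 σ) + q (c1 σ)) / 2) else 0)) • ν σ)
    (divT : ι → ℝ)
    (hdiv : ∀ K, divT K = (vol K)⁻¹ *
      ∑ σ, ((if c0 σ = K then s σ else 0) - (if c1 σ = K then s σ else 0)) *
        ⟪ν σ, (2:ℝ)⁻¹ • (v (c0 σ) + v (c1 σ))⟫) :
    ∑ K, vol K * (⟪gradT K, v K⟫ + q K * divT K) = 0 := by
  classical
  have key : ∀ (σ : F) (E : ι → ℝ),
      ∑ K, ((if c0 σ = K then s σ else 0) - (if c1 σ = K then s σ else 0)) * E K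
        = s σ * E (c0 σ) - s σ * E (c1 σ) := by
    intro σ E
    simp [sub_mul, Finset.sum_sub_distrib, ite_mul, Finset.sum_ite_eq]
  calc ∑ K, vol K * (⟪gradT K, v K⟫ + q K * divT K)
      = ∑ K, ∑ σ, ((if c0 σ = K then s σ else 0) - (if c1 σ = K then s σ else 0)) *
          (((q (c0 σ) + q (c1 σ)) / 2) * ⟪ν σ, v K⟫
            + q K * ⟪ν σ, (2:ℝ)⁻¹ • (v (c0 σ) + v (c1 σ))⟫) := by
        refine Finset.sum_congr rfl fun K _ => ?_
        rw [hgrad K, hdiv K, real_inner_smul_left, sum_inner]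
        simp only [real_inner_smul_left]
        have hv : vol K ≠ 0 := (hvol K).ne'
        field_simp
        rw [Finset.mul_sum, ← Finset.sum_add_distrib]
        refine Finset.sum_congr rfl fun σ _ => ?_
        split_ifs <;> ring
    _ = ∑ σ, ∑ K, ((if c0 σ = K then s σ else 0) - (if c1 σ = K then s σ else 0)) *
          (((q (c0 σ) + q (c1 σ)) / 2) * ⟪ν σ, v K⟫
            + q K * ⟪ν σ, (2:ℝ)⁻¹ • (v (c0 σ) + v (c1 σ))⟫) := Finset.sum_comm
    _ = ∑ σ, (s σ * (q (c0 σ) * ⟪ν σ, v (c0 σ)⟫) - s σ * (q (c1 σ) * ⟪ν σ, v (c1 σ)⟫)) := by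
        refine Finset.sum_congr rfl fun σ _ => ?_
        rw [key]
        simp only [real_inner_smul_right, inner_add_right]
        ring
    _ = ∑ σ, ∑ K, ((if c0 σ = K then s σ else 0) - (if c1 σ = K then s σ else 0)) *
          (q K * ⟪ν σ, v K⟫) := by
        refine Finset.sum_congr rfl fun σ _ => ?_
        exact (key σ fun K => q K * ⟪ν σ, v K⟫).symm
    _ = ∑ K, ∑ σ, ((if c0 σ = K then s σ else 0) - (if c1 σ = K then s σ else 0)) *
          (q K * ⟪ν σ, v K⟫) := Finset.sum_comm
    _ = 0 := by
        refine Finset.sum_eq_zero fun K _ => ?_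
        have h : ∑ σ, ((if c0 σ = K then s σ else 0) - (if c1 σ = K then s σ else 0)) *
            (q K * ⟪ν σ, v K⟫)
            = ⟪∑ σ, ((if c0 σ = K then s σ else 0) - (if c1 σ = K then s σ else 0)) • ν σ,
                q K • v K⟫ := by
          rw [sum_inner]
          refine Finset.sum_congr rfl fun σ _ => ?_
          rw [real_inner_smul_left, real_inner_smul_right]
        rw [h, hgeo K, inner_zero_left]
end

section
/- With the reconstruction operator R_T and dual gradient (∇_D q)_σ = (|σ|/|D_σ|)(q_L − q_K) ν_{σ,K}, for any 1 ≤ p < ∞ there exists c = c(d,p) such that for every piecewise constant q, ‖R_T q − q‖_{L^p(Ω)} ≤ c h_T ‖∇_D q‖_{L^p(Ω)}, where h_T is the mesh size. -/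
theorem stmt_13 (p c₁ c₂ : ℝ) (hp : 1 ≤ p) (hc₁ : 0 < c₁) (hc₂ : 0 < c₂) :
    ∃ c : ℝ, 0 < c ∧
      ∀ (F : Type) [Fintype F],
      ∀ (h : ℝ) (s m0 m1 μ qK qL : F → ℝ),
        0 < h → (∀ σ, 0 < s σ) → (∀ σ, 0 ≤ m0 σ) → (∀ σ, 0 ≤ m1 σ) →
        (∀ σ, 0 ≤ μ σ ∧ μ σ ≤ 1) →
        (∀ σ, c₁ * h * s σ ≤ m0 σ + m1 σ ∧ m0 σ + m1 σ ≤ c₂ * h * s σ) →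
        (∑ σ, (m0 σ * |(μ σ * qK σ + (1 - μ σ) * qL σ) - qK σ| ^ p
             + m1 σ * |(μ σ * qK σ + (1 - μ σ) * qL σ) - qL σ| ^ p))
          ≤ c * h ^ p * ∑ σ, (m0 σ + m1 σ) * (s σ / (m0 σ + m1 σ) * |qL σ - qK σ|) ^ p := by
  refine ⟨c₂ ^ p, Real.rpow_pos_of_pos hc₂ p, ?_⟩
  intro F _ h s m0 m1 μ qK qL hh hs hm0 hm1 hμ hreg
  rw [Finset.mul_sum]
  apply Finset.sum_le_sum
  intro σ _
  have hp0 : (0:ℝ) < p := by linarith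
  set d := |qL σ - qK σ| with hd
  have hd0 : 0 ≤ d := abs_nonneg _
  set M := m0 σ + m1 σ with hM
  have hMpos : 0 < M := lt_of_lt_of_le (mul_pos (mul_pos hc₁ hh) (hs σ)) (hreg σ).1
  have hμ0 : 0 ≤ μ σ := (hμ σ).1
  have hμ1 : μ σ ≤ 1 := (hμ σ).2
  have hA : |(μ σ * qK σ + (1 - μ σ) * qL σ) - qK σ| ≤ d := by
    have e : (μ σ * qK σ + (1 - μ σ) * qL σ) - qK σ = (1 - μ σ) * (qL σ - qK σ) := by ring
    rw [e, abs_mul, abs_of_nonneg (by linarith : (0:ℝ) ≤ 1 - μ σ)]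
    nlinarith
  have hB : |(μ σ * qK σ + (1 - μ σ) * qL σ) - qL σ| ≤ d := by
    have e : (μ σ * qK σ + (1 - μ σ) * qL σ) - qL σ = μ σ * (qK σ - qL σ) := by ring
    rw [e, abs_mul, abs_of_nonneg hμ0, show |qK σ - qL σ| = d by rw [hd, abs_sub_comm]]
    nlinarith
  have hAp : |(μ σ * qK σ + (1 - μ σ) * qL σ) - qK σ| ^ p ≤ d ^ p :=
    Real.rpow_le_rpow (abs_nonneg _) hA hp0.le
  have hBp : |(μ σ * qK σ + (1 - μ σ) * qL σ) - qL σ| ^ p ≤ d ^ p :=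
    Real.rpow_le_rpow (abs_nonneg _) hB hp0.le
  have step1 : m0 σ * |(μ σ * qK σ + (1 - μ σ) * qL σ) - qK σ| ^ p
      + m1 σ * |(μ σ * qK σ + (1 - μ σ) * qL σ) - qL σ| ^ p ≤ M * d ^ p := by
    have h1 := mul_le_mul_of_nonneg_left hAp (hm0 σ)
    have h2 := mul_le_mul_of_nonneg_left hBp (hm1 σ)
    rw [hM]; nlinarith
  refine step1.trans ?_
  -- rewrite RHS
  have hsσ := hs σ
  have e1 : (s σ / M * d) ^ p = (s σ / M) ^ p * d ^ p :=
    Real.mul_rpow (by positivity) hd0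
  have e2 : c₂ ^ p * h ^ p * (M * ((s σ / M) ^ p * d ^ p))
      = (c₂ * h * s σ / M) ^ p * (M * d ^ p) := by
    rw [show c₂ * h * s σ / M = c₂ * (h * (s σ / M)) by ring,
      Real.mul_rpow hc₂.le (by positivity),
      Real.mul_rpow hh.le (by positivity)]
    ring
  rw [e1, e2]
  have key : 1 ≤ (c₂ * h * s σ / M) ^ p := by
    have hb : 1 ≤ c₂ * h * s σ / M := by
      rw [le_div_iff₀ hMpos]; simpa using (hreg σ).2
    calc (1:ℝ) = 1 ^ p := (Real.one_rpow p).symm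
    _ ≤ (c₂ * h * s σ / M) ^ p := Real.rpow_le_rpow zero_le_one hb hp0.le
  exact le_mul_of_one_le_left (by positivity) key
end
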